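/- Let N be a quasi-binary tree-child time consistent hybridization network and let i, j be two leaves of N. Then i and j are siblings if, and only if, L_N(i,j) = 2, where L_N(i,j) is the sum of the distances from the least common semi-strict ancestor [i,j] to i and to j. -/

import Mathlib

open Classical

/-- A walk (path) in a digraph: a nonempty list of vertices with consecutive arcs. -/
def IsWalk {V : Type} (E : V → V → Prop) (p : List V) : Prop := p ≠ [] ∧ p.Chain' E

/-- A path with origin `u` and end `v`. -/
def WalkFromTo {V : Type} (E : V → V → Prop) (u v : V) (p : List V) : Prop :=
  IsWalk E p ∧ p.head? = some u ∧ p.getLast? = some v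

/-- `v` is a descendant of `u` (possibly trivial path from `u` to `v`). -/
def Desc {V : Type} (E : V → V → Prop) (u v : V) : Prop := Relation.ReflTransGen E u v

/-- A root: a node with no incoming arcs. -/
def IsRootNode {V : Type} (E : V → V → Prop) (r : V) : Prop := ∀ u, ¬ E u r

/-- `u` is a strict ancestor of `v`: `v` is a descendant of `u` and every path
from a root to `v` contains `u`. -/
def StrictAnc {V : Type} (E : V → V → Prop) (u v : V) : Prop :=
  Desc E u v ∧ ∀ (r : V) (p : List V), IsRootNode E r → WalkFromTo E r v p → u ∈ p

/-- In-degree. -/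
noncomputable def indeg {V : Type} (E : V → V → Prop) (v : V) : ℕ := {u | E u v}.ncard
/-- Out-degree. -/
noncomputable def outdeg {V : Type} (E : V → V → Prop) (v : V) : ℕ := {w | E v w}.ncard

/-- Tree node: in-degree at most 1. -/
def IsTreeNode {V : Type} (E : V → V → Prop) (v : V) : Prop := indeg E v ≤ 1
/-- Hybrid node: in-degree at least 2. -/
def IsHybrid {V : Type} (E : V → V → Prop) (v : V) : Prop := 2 ≤ indeg E v
/-- Leaf: no outgoing arcs. -/
def IsLeaf {V : Type} (E : V → V → Prop) (v : V) : Prop := ∀ w, ¬ E v w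

/-- Acyclicity: no non-trivial path from a node to itself. -/
def Acyclic {V : Type} (E : V → V → Prop) : Prop := ∀ v, ¬ Relation.TransGen E v v

/-- A hybridization network: a rooted DAG whose single root has out-degree > 1. -/
structure IsHybNet {V : Type} (E : V → V → Prop) (r : V) : Prop where
  acyclic : Acyclic E
  isRoot : IsRootNode E r
  uniqueRoot : ∀ x, IsRootNode E x → x = r
  rootOut : 2 ≤ outdeg E r

/-- Tree-child condition: every internal node has a tree-node child. -/
def TreeChild {V : Type} (E : V → V → Prop) : Prop :=
  ∀ v, ¬ IsLeaf E v → ∃ w, E v w ∧ IsTreeNode E w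

/-- Time consistency: a temporal representation exists. -/
def TimeConsistent {V : Type} (E : V → V → Prop) : Prop :=
  ∃ τ : V → ℕ, ∀ u v, E u v → (IsTreeNode E v → τ u < τ v) ∧ (IsHybrid E v → τ u = τ v)

/-- The leaves are bijectively labeled by `S` via `leaf`. -/
def LabelsLeaves {V S : Type} (E : V → V → Prop) (leaf : S → V) : Prop :=
  Function.Injective leaf ∧ (∀ s, IsLeaf E (leaf s)) ∧ ∀ v, IsLeaf E v → ∃ s, leaf s = v

/-- Distance: length of a shortest path from `u` to `v`. -/
noncomputable def dist {V : Type} (E : V → V → Prop) (u v : V) : ℕ :=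
  sInf {n | ∃ p, WalkFromTo E u v p ∧ p.length = n + 1}

/-- Height: largest length of a path from `v` to a leaf. -/
noncomputable def height {V : Type} (E : V → V → Prop) (v : V) : ℕ :=
  sSup {n | ∃ p w, WalkFromTo E v w p ∧ IsLeaf E w ∧ p.length = n + 1}

/-- Common ancestors of `u` and `v` that are strict ancestors of at least one of them. -/
def NetCSA {V : Type} (E : V → V → Prop) (u v : V) : Set V :=
  {x | Desc E x u ∧ Desc E x v ∧ (StrictAnc E x u ∨ StrictAnc E x v)}

/-- `x` is a least common semi-strict ancestor of `u` and `v`. -/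
def IsLCSA {V : Type} (E : V → V → Prop) (u v x : V) : Prop :=
  x ∈ NetCSA E u v ∧ ∀ y ∈ NetCSA E u v, height E x ≤ height E y

/-- The least common semi-strict ancestor `[u,v]` (the root `r` witnesses nonemptiness). -/
noncomputable def lcsa {V : Type} (E : V → V → Prop) (r u v : V) : V :=
  @Classical.epsilon V ⟨r⟩ (IsLCSA E u v)

/-- `ℓ_N(u,v)`: the distance from `[u,v]` to `u`. -/
noncomputable def ell {V : Type} (E : V → V → Prop) (r u v : V) : ℕ :=
  dist E (lcsa E r u v) u

/-- `L_N(u,v) = ℓ_N(u,v) + ℓ_N(v,u)`: the LCSA-path length between `u` and `v`. -/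
noncomputable def pathLen {V : Type} (E : V → V → Prop) (r u v : V) : ℕ :=
  ell E r u v + ell E r v u

/-- `h_N(u,v)`: −1 if `[u,v]` is a strict ancestor of `u` only, 1 if of `v` only, 0 if of both. -/
noncomputable def hval {V : Type} (E : V → V → Prop) (r u v : V) : ℤ :=
  if StrictAnc E (lcsa E r u v) u then
    (if StrictAnc E (lcsa E r u v) v then 0 else -1)
  else 1

/-- Siblings: distinct nodes sharing a parent. -/
def Sibling {V : Type} (E : V → V → Prop) (u v : V) : Prop :=
  u ≠ v ∧ ∃ p, E p u ∧ E p v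

/-- A tree path: a non-trivial path whose end and intermediate nodes are tree nodes. -/
def TreePath {V : Type} (E : V → V → Prop) (p : List V) (u v : V) : Prop :=
  WalkFromTo E u v p ∧ 2 ≤ p.length ∧ ∀ w ∈ p.tail, IsTreeNode E w

/-- `v` is a tree descendant of `u`. -/
def TreeDesc {V : Type} (E : V → V → Prop) (u v : V) : Prop := ∃ p, TreePath E p u v

/-- Quasi-binary hybridization network. -/
def QuasiBinary {V : Type} (E : V → V → Prop) : Prop :=
  ∀ v : V, (indeg E v, outdeg E v) ∈ ({(0,2),(1,0),(1,2),(2,0),(2,1),(2,2)} : Set (ℕ × ℕ))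

/-- Fully resolved hybridization network node types. -/
def FullyResolvedHyb {V : Type} (E : V → V → Prop) : Prop :=
  ∀ v : V, (indeg E v, outdeg E v) ∈ ({(0,2),(1,0),(1,2),(2,0),(2,2)} : Set (ℕ × ℕ))

/-- Fully resolved phylogenetic network node types. -/
def FullyResolvedPhylo {V : Type} (E : V → V → Prop) : Prop :=
  ∀ v : V, (indeg E v, outdeg E v) ∈ ({(0,2),(1,0),(1,2),(2,1)} : Set (ℕ × ℕ))

/-- Phylogenetic network condition: every hybrid node has exactly one child, a tree node. -/
def PhyloNet {V : Type} (E : V → V → Prop) : Prop :=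
  ∀ v, IsHybrid E v → ∃ w, E v w ∧ IsTreeNode E w ∧ ∀ x, E v x → x = w

section A
variable {V : Type} {E : V → V → Prop}

theorem s8_walk_single {x : V} : WalkFromTo E x x [x] :=
  ⟨⟨by simp, List.isChain_singleton x⟩, rfl, rfl⟩

theorem s8_walk_snoc {a b c : V} {p : List V} (hp : WalkFromTo E a b p) (h : E b c) :
    WalkFromTo E a c (p ++ [c]) := by
  obtain ⟨⟨hne, hch⟩, hh, hl⟩ := hp
  refine ⟨⟨by simp, ?_⟩, ?_, by simp⟩
  · apply List.isChain_append.mpr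
    refine ⟨hch, List.isChain_singleton c, ?_⟩
    intro x hx y hy
    simp only [List.head?_cons, Option.mem_some_iff] at hy
    rw [hl] at hx
    simp only [Option.mem_some_iff] at hx
    subst hx; subst hy; exact h
  · rw [List.head?_append, hh]; rfl

theorem s8_walk_of_desc {x y : V} (h : Desc E x y) : ∃ p, WalkFromTo E x y p := by
  induction h with
  | refl => exact ⟨[x], s8_walk_single⟩
  | tail h e ih =>
    obtain ⟨p, hp⟩ := ih
    exact ⟨p ++ [_], s8_walk_snoc hp e⟩

theorem s8_walk_desc_mem : ∀ {p : List V} {a b x : V},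
    WalkFromTo E a b p → x ∈ p → Desc E a x ∧ Desc E x b := by
  intro p
  induction p with
  | nil => intro a b x hw hx; exact absurd hw.2.1 (by simp)
  | cons a0 t ih =>
    intro a b x hw hx
    obtain ⟨⟨hne, hch⟩, hh, hl⟩ := hw
    simp only [List.head?_cons, Option.some_inj] at hh
    subst hh
    match t, hx with
    | [], hx =>
      simp at hx hl
      subst hx; subst hl
      exact ⟨.refl, .refl⟩
    | c :: t', hx =>
      have hac : E a0 c := (List.isChain_cons_cons.mp hch).1
      have hw' : WalkFromTo E c b (c :: t') :=
        ⟨⟨by simp, (List.isChain_cons_cons.mp hch).2⟩, rfl, by rw [← hl, List.getLast?_cons_cons]⟩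
      rcases List.mem_cons.mp hx with rfl | hx'
      · exact ⟨.refl, Relation.ReflTransGen.head hac (ih hw' (by simp)).2⟩
      · obtain ⟨h1, h2⟩ := ih hw' hx'
        exact ⟨h1.head hac, h2⟩

theorem s8_walk_desc {p : List V} {a b : V} (hw : WalkFromTo E a b p) : Desc E a b := by
  have : a ∈ p := by
    obtain ⟨⟨hne, _⟩, hh, _⟩ := hw
    cases p with
    | nil => simp at hne
    | cons h t => simp at hh; subst hh; simp
  exact (s8_walk_desc_mem hw this).2

theorem s8_leaf_fix {i y : V} (hi : ∀ w, ¬ E i w) (h : Desc E i y) : y = i := by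
  rcases Relation.reflTransGen_iff_eq_or_transGen.mp h with h' | h'
  · exact h'
  · exfalso; clear h
    induction h' with
    | single h1 => exact hi _ h1
    | tail _ e ih => exact ih

theorem s8_walk_penult : ∀ {p : List V} {a b : V},
    WalkFromTo E a b p → a ≠ b → ∃ u ∈ p, Desc E a u ∧ E u b := by
  intro p
  induction p with
  | nil => intro a b hw; exact absurd hw.2.1 (by simp)
  | cons a0 t ih =>
    intro a b hw hab
    obtain ⟨⟨hne, hch⟩, hh, hl⟩ := hw
    simp only [List.head?_cons, Option.some_inj] at hh
    subst hh
    match t with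
    | [] => simp at hl; exact absurd hl hab
    | c :: t' =>
      have hac : E a0 c := (List.isChain_cons_cons.mp hch).1
      have hw' : WalkFromTo E c b (c :: t') :=
        ⟨⟨by simp, (List.isChain_cons_cons.mp hch).2⟩, rfl, by rw [← hl, List.getLast?_cons_cons]⟩
      by_cases hcb : c = b
      · subst hcb; exact ⟨a0, by simp, .refl, hac⟩
      · obtain ⟨u, hu, hdu, hub⟩ := ih hw' hcb
        exact ⟨u, by simp [hu], hdu.head hac, hub⟩

theorem s8_walk_one {p : List V} {a b : V} (hw : WalkFromTo E a b p) (h : p.length = 1) :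
    a = b := by
  obtain ⟨c, rfl⟩ := List.length_eq_one_iff.mp h
  obtain ⟨_, hh, hl⟩ := hw
  simp at hh hl
  rw [← hh, ← hl]

theorem s8_walk_two {p : List V} {a b : V} (hw : WalkFromTo E a b p) (h : p.length = 2) :
    E a b := by
  match p, h with
  | [x, y], _ =>
    obtain ⟨⟨_, hch⟩, hh, hl⟩ := hw
    simp at hh hl
    subst hh; subst hl
    exact (List.isChain_cons_cons.mp hch).1

theorem s8_walk_append {a b c : V} {p q : List V} (hp : WalkFromTo E a b p)
    (hq : WalkFromTo E b c q) :
    WalkFromTo E a c (p ++ q.tail) ∧ (p ++ q.tail).length + 1 = p.length + q.length := by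
  obtain ⟨⟨hqne, hqch⟩, hqh, hql⟩ := hq
  match q, hqh with
  | b0 :: qt, hqh =>
    simp only [List.head?_cons, Option.some_inj] at hqh
    subst hqh
    match qt with
    | [] =>
      simp at hql
      subst hql
      exact ⟨by simpa using hp, by simp⟩
    | d :: qt' =>
      obtain ⟨⟨hpne, hpch⟩, hph, hpl⟩ := hp
      have hbd : E b0 d := (List.isChain_cons_cons.mp hqch).1
      simp only [List.tail_cons]
      constructor
      · refine ⟨⟨by simp [hpne], ?_⟩, ?_, ?_⟩
        · apply List.isChain_append.mpr
          refine ⟨hpch, (List.isChain_cons_cons.mp hqch).2, ?_⟩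
          intro x hx y hy
          rw [hpl] at hx
          simp only [List.head?_cons, Option.mem_some_iff] at hx hy
          subst hx; subst hy; exact hbd
        · rw [List.head?_append, hph]; rfl
        · rw [List.getLast?_append]
          rw [List.getLast?_cons_cons] at hql
          simp [hql]
      · simp; omega

end A


section B
variable {V : Type} [Fintype V] {E : V → V → Prop} {r : V}

theorem s8_wf (hac : Acyclic E) : WellFounded (Relation.TransGen E) := by
  have h1 : IsTrans V (Relation.TransGen E) := ⟨fun _ _ _ => Relation.TransGen.trans⟩
  have h2 : IsIrrefl V (Relation.TransGen E) := ⟨fun v h => hac v h⟩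
  exact Finite.wellFounded_of_trans_of_irrefl _

theorem s8_wf_swap (hac : Acyclic E) : WellFounded (Function.swap E) := by
  have h1 : IsTrans V (Relation.TransGen (Function.swap E)) := ⟨fun _ _ _ => Relation.TransGen.trans⟩
  have h2 : IsIrrefl V (Relation.TransGen (Function.swap E)) :=
    ⟨fun v h => hac v (Relation.transGen_swap.mp h)⟩
  exact Subrelation.wf (fun h => Relation.TransGen.single h)
    (Finite.wellFounded_of_trans_of_irrefl _)

theorem s8_root_desc (hnet : IsHybNet E r) : ∀ v, Desc E r v := by
  have wf : WellFounded (fun a b : V => E a b) :=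
    Subrelation.wf (fun h => Relation.TransGen.single h) (s8_wf hnet.acyclic)
  intro v
  induction v using wf.induction with
  | _ v ih =>
    by_cases hv : ∃ u, E u v
    · obtain ⟨u, hu⟩ := hv
      exact (ih u hu).tail hu
    · push_neg at hv
      have : v = r := hnet.uniqueRoot v hv
      subst this; exact .refl

theorem s8_exists_leaf_desc (hac : Acyclic E) (v : V) :
    ∃ w, Desc E v w ∧ IsLeaf E w := by
  induction v using (s8_wf_swap hac).induction with
  | _ v ih =>
    by_cases hv : IsLeaf E v
    · exact ⟨v, .refl, hv⟩
    · simp only [IsLeaf, not_forall, not_not] at hv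
      obtain ⟨c, hc⟩ := hv
      obtain ⟨w, hdw, hlw⟩ := ih c hc
      exact ⟨w, hdw.head hc, hlw⟩

theorem s8_chain_transGen {x y : V} : ∀ {l : List V},
    List.Chain E x l → y ∈ l → Relation.TransGen E x y := by
  intro l
  induction l generalizing x with
  | nil => intro _ h; simp at h
  | cons c t ih =>
    intro hch hy
    simp only [List.Chain, List.isChain_cons_cons] at hch
    rcases List.mem_cons.mp hy with rfl | hy'
    · exact .single hch.1
    · exact (ih hch.2 hy').head hch.1

theorem s8_walk_nodup (hac : Acyclic E) : ∀ {p : List V}, p.Chain' E → p.Nodup := by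
  intro p
  induction p with
  | nil => intro _; simp
  | cons a t ih =>
    intro hch
    have hct : List.Chain E a t := hch
    refine List.nodup_cons.mpr ⟨fun hmem => ?_, ih (List.IsChain.tail hch)⟩
    exact hac a (s8_chain_transGen hct hmem)

theorem s8_walk_len_le (hac : Acyclic E) {p : List V} (hw : IsWalk E p) :
    p.length ≤ Fintype.card V :=
  (s8_walk_nodup hac hw.2).length_le_card

theorem s8_height_bdd (hac : Acyclic E) (v : V) :
    BddAbove {n | ∃ p w, WalkFromTo E v w p ∧ IsLeaf E w ∧ p.length = n + 1} := by
  refine ⟨Fintype.card V, fun n hn => ?_⟩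
  obtain ⟨p, w, hw, _, hlen⟩ := hn
  have := s8_walk_len_le hac hw.1
  omega

theorem s8_le_height (hac : Acyclic E) {v w : V} {p : List V} (hw : WalkFromTo E v w p)
    (hlw : IsLeaf E w) {n : ℕ} (hlen : p.length = n + 1) : n ≤ height E v :=
  le_csSup (s8_height_bdd hac v) ⟨p, w, hw, hlw, hlen⟩

theorem s8_height_set_nonempty (hac : Acyclic E) (v : V) :
    {n | ∃ p w, WalkFromTo E v w p ∧ IsLeaf E w ∧ p.length = n + 1}.Nonempty := by
  obtain ⟨w, hdw, hlw⟩ := s8_exists_leaf_desc hac v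
  obtain ⟨p, hp⟩ := s8_walk_of_desc hdw
  have hpos : 1 ≤ p.length := List.length_pos_iff.mpr hp.1.1
  exact ⟨p.length - 1, p, w, hp, hlw, by omega⟩

theorem s8_height_lt (hac : Acyclic E) {u v : V} (h : Relation.TransGen E u v) :
    height E v < height E u := by
  have hmem := Nat.sSup_mem (s8_height_set_nonempty hac v) (s8_height_bdd hac v)
  obtain ⟨q, w, hq, hlw, hqlen⟩ := hmem
  obtain ⟨c, hc, hcv⟩ : ∃ c, E u c ∧ Desc E c v := by
    rcases h.to_reflTransGen.cases_head with h' | ⟨c, hc, ht⟩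
    · exact absurd (h' ▸ h) (hac u)
    · exact ⟨c, hc, ht⟩
  obtain ⟨p0, hp0⟩ := s8_walk_of_desc hcv
  have hp : WalkFromTo E u v (u :: p0) := by
    obtain ⟨⟨hne, hch⟩, hh, hl⟩ := hp0
    match p0, hne with
    | c0 :: t, _ =>
      simp only [List.head?_cons, Option.some_inj] at hh
      subst hh
      exact ⟨⟨by simp, List.isChain_cons_cons.mpr ⟨hc, hch⟩⟩, rfl,
        by rw [List.getLast?_cons_cons]; exact hl⟩
  obtain ⟨hw2, hlen2⟩ := s8_walk_append hp hq
  have hp0pos : 1 ≤ p0.length := List.length_pos_iff.mpr hp0.1.1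
  have hqv : q.length = height E v + 1 := hqlen
  have hbig : ((u :: p0) ++ q.tail).length = (height E v + p0.length) + 1 := by
    simp at hlen2 ⊢; omega
  have := s8_le_height hac hw2 hlw hbig
  omega

end B


section C
variable {V : Type} [Fintype V] {E : V → V → Prop} {r : V}

theorem s8_dist_le_one {x y : V} (h : E x y) : dist E x y ≤ 1 := by
  apply Nat.sInf_le
  refine ⟨[x, y], ⟨⟨by simp, ?_⟩, rfl, rfl⟩, rfl⟩
  exact List.isChain_cons_cons.mpr ⟨h, List.isChain_singleton y⟩

theorem s8_dist_spec {x y : V} (h : Desc E x y) :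
    ∃ p, WalkFromTo E x y p ∧ p.length = dist E x y + 1 := by
  have hne : {n | ∃ p, WalkFromTo E x y p ∧ p.length = n + 1}.Nonempty := by
    obtain ⟨p, hp⟩ := s8_walk_of_desc h
    have : 1 ≤ p.length := List.length_pos_iff.mpr hp.1.1
    exact ⟨p.length - 1, p, hp, by omega⟩
  have := Nat.sInf_mem hne
  obtain ⟨p, hp, hlen⟩ := this
  exact ⟨p, hp, hlen⟩

theorem s8_dist_pos {x y : V} (hxy : x ≠ y) (h : Desc E x y) : 1 ≤ dist E x y := by
  rcases Nat.eq_zero_or_pos (dist E x y) with h0 | h1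
  · obtain ⟨p, hp, hlen⟩ := s8_dist_spec h
    rw [h0] at hlen
    exact absurd (s8_walk_one hp hlen) hxy
  · exact h1

theorem s8_dist_eq_one {x y : V} (hxy : x ≠ y) (h : E x y) : dist E x y = 1 :=
  le_antisymm (s8_dist_le_one h) (s8_dist_pos hxy (.single h))

theorem s8_csa_comm (u v : V) : NetCSA E u v = NetCSA E v u := by
  ext x
  constructor <;> rintro ⟨h1, h2, h3⟩ <;> exact ⟨h2, h1, h3.symm⟩

theorem s8_root_mem_csa (hnet : IsHybNet E r) (u v : V) : r ∈ NetCSA E u v := by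
  refine ⟨s8_root_desc hnet u, s8_root_desc hnet v, Or.inl ⟨s8_root_desc hnet u, ?_⟩⟩
  intro r' p hr' hp
  have hrr : r' = r := hnet.uniqueRoot r' hr'
  subst hrr
  obtain ⟨⟨hne, _⟩, hh, _⟩ := hp
  cases p with
  | nil => simp at hne
  | cons a t => simp at hh; subst hh; simp

theorem s8_lcsa_spec (hnet : IsHybNet E r) (u v : V) : IsLCSA E u v (lcsa E r u v) := by
  obtain ⟨x, hx, hmin⟩ := Set.exists_min_image (NetCSA E u v) (height E) (Set.toFinite _)
    ⟨r, s8_root_mem_csa hnet u v⟩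
  exact Classical.epsilon_spec_aux ⟨r⟩ (IsLCSA E u v) ⟨x, hx, hmin⟩

theorem s8_parent_unique {p q v : V} (h : indeg E v ≤ 1) (hp : E p v) (hq : E q v) :
    p = q := by
  by_contra hne
  have hsub : ({p, q} : Set V) ⊆ {u | E u v} := by
    rintro x (rfl | rfl)
    · exact hp
    · exact hq
  have := Set.ncard_le_ncard hsub (Set.toFinite _)
  rw [Set.ncard_pair hne] at this
  exact absurd (le_trans this h) (by omega)

theorem s8_other_parent {v p : V} (h : 2 ≤ indeg E v) (hp : E p v) :
    ∃ q, E q v ∧ q ≠ p := by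
  by_contra h'
  push_neg at h'
  have hsub : {u | E u v} ⊆ {p} := fun u hu => h' u hu
  have := Set.ncard_le_ncard hsub (Set.toFinite _)
  rw [Set.ncard_singleton] at this
  exact absurd (le_trans h this) (by omega)

theorem s8_outdeg_le_two (hqb : QuasiBinary E) (v : V) : outdeg E v ≤ 2 := by
  have := hqb v
  simp only [Set.mem_insert_iff, Set.mem_singleton_iff, Prod.mk.injEq] at this
  rcases this with ⟨_, h⟩ | ⟨_, h⟩ | ⟨_, h⟩ | ⟨_, h⟩ | ⟨_, h⟩ | ⟨_, h⟩ <;> omega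

theorem s8_children_eq {v a b : V} (hle : outdeg E v ≤ 2) (ha : E v a) (hb : E v b)
    (hab : a ≠ b) : ∀ c, E v c → c = a ∨ c = b := by
  intro c hc
  by_contra h
  push_neg at h
  have hsub : ({a, b, c} : Set V) ⊆ {w | E v w} := by
    rintro x (rfl | rfl | rfl)
    · exact ha
    · exact hb
    · exact hc
  have hcard : ({a, b, c} : Set V).ncard = 3 := by
    rw [Set.ncard_insert_of_notMem (by simp [hab, Ne.symm h.1]) (Set.toFinite _),
      Set.ncard_pair (Ne.symm h.2)]
  have := Set.ncard_le_ncard hsub (Set.toFinite _)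
  rw [hcard] at this
  exact absurd (le_trans this hle) (by omega)

theorem s8_tau_arc_le {τ : V → ℕ}
    (hτ : ∀ u v, E u v → (IsTreeNode E v → τ u < τ v) ∧ (IsHybrid E v → τ u = τ v))
    {u v : V} (h : E u v) : τ u ≤ τ v := by
  rcases le_or_gt (indeg E v) 1 with h1 | h2
  · exact le_of_lt ((hτ u v h).1 h1)
  · exact le_of_eq ((hτ u v h).2 h2)

theorem s8_tau_desc_le {τ : V → ℕ}
    (hτ : ∀ u v, E u v → (IsTreeNode E v → τ u < τ v) ∧ (IsHybrid E v → τ u = τ v))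
    {u v : V} (h : Desc E u v) : τ u ≤ τ v := by
  induction h with
  | refl => exact le_refl _
  | tail _ e ih => exact le_trans ih (s8_tau_arc_le hτ e)

theorem s8_strict_of_tree_parent {p v : V} (hp : E p v) (hv : IsTreeNode E v) :
    StrictAnc E p v := by
  refine ⟨.single hp, fun r' q hr' hq => ?_⟩
  have hne : r' ≠ v := by rintro rfl; exact hr' p hp
  obtain ⟨u, hu, _, hub⟩ := s8_walk_penult hq hne
  have : u = p := s8_parent_unique hv hub hp
  exact this ▸ hu

end C


section D
variable {V : Type} [Fintype V] {E : V → V → Prop} {r : V}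

theorem s8_lcsa_parent {i j x : V} (hac : Acyclic E) (hi : IsLeaf E i) (hj : IsLeaf E j)
    (hij : i ≠ j) (hx : x ∈ NetCSA E i j) (hxh : height E x ≤ 1) : E x i ∧ E x j := by
  obtain ⟨hdi, hdj, _⟩ := hx
  have hxi : x ≠ i := fun h => hij ((s8_leaf_fix hi (h ▸ hdj)).symm)
  have hxj : x ≠ j := fun h => hij (s8_leaf_fix hj (h ▸ hdi))
  constructor
  · obtain ⟨p, hp⟩ := s8_walk_of_desc hdi
    have h1 : 1 ≤ p.length := List.length_pos_iff.mpr hp.1.1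
    have h2 : p.length - 1 ≤ height E x := s8_le_height hac hp hi (by omega)
    have h3 : p.length ≠ 1 := fun h => hxi (s8_walk_one hp h)
    exact s8_walk_two hp (by omega)
  · obtain ⟨p, hp⟩ := s8_walk_of_desc hdj
    have h1 : 1 ≤ p.length := List.length_pos_iff.mpr hp.1.1
    have h2 : p.length - 1 ≤ height E x := s8_le_height hac hp hj (by omega)
    have h3 : p.length ≠ 1 := fun h => hxj (s8_walk_one hp h)
    exact s8_walk_two hp (by omega)

theorem s8_forward (hnet : IsHybNet E r) (hqb : QuasiBinary E) (htc : TreeChild E)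
    {i j : V} (hi : IsLeaf E i) (hj : IsLeaf E j) (hij : i ≠ j)
    (hs : Sibling E i j) : pathLen E r i j = 2 := by
  obtain ⟨-, p, hpi, hpj⟩ := hs
  have hch := s8_children_eq (s8_outdeg_le_two hqb p) hpi hpj hij
  have hpnl : ¬ IsLeaf E p := fun h => h i hpi
  obtain ⟨w, hpw, hwt⟩ := htc p hpnl
  have hpcsa : p ∈ NetCSA E i j := by
    refine ⟨.single hpi, .single hpj, ?_⟩
    rcases hch w hpw with rfl | rfl
    · exact Or.inl (s8_strict_of_tree_parent hpi hwt)
    · exact Or.inr (s8_strict_of_tree_parent hpj hwt)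
  have hp1 : height E p ≤ 1 := by
    apply csSup_le
    · exact ⟨1, [p, i], i,
        ⟨⟨by simp, List.isChain_cons_cons.mpr ⟨hpi, List.isChain_singleton i⟩⟩, rfl, rfl⟩, hi, rfl⟩
    · rintro n ⟨q, w', hq, hlw, hqlen⟩
      obtain ⟨⟨hqne, hqch⟩, hqh, hql⟩ := hq
      match q, hqh, hqch, hql, hqlen with
      | q0 :: t, hqh, hqch, hql, hqlen =>
        simp only [List.head?_cons, Option.some_inj] at hqh
        rw [hqh] at hqch hql
        match t, hqch, hql, hqlen with
        | [], _, hql, _ =>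
          exfalso
          simp at hql
          rw [← hql] at hlw
          exact hlw i hpi
        | c :: t', hqch, hql, hqlen =>
          have hpc : E p c := (List.isChain_cons_cons.mp hqch).1
          have hcl : IsLeaf E c := by rcases hch c hpc with rfl | rfl; exacts [hi, hj]
          match t', hqch, hqlen with
          | [], _, hqlen => simp at hqlen; omega
          | d :: t'', hqch, _ =>
            exact absurd ((List.isChain_cons_cons.mp (List.isChain_cons_cons.mp hqch).2).1) (hcl d)
  obtain ⟨hm1, hmin1⟩ := s8_lcsa_spec hnet i j
  obtain ⟨hm2, hmin2⟩ := s8_lcsa_spec hnet j i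
  have hx1h : height E (lcsa E r i j) ≤ 1 := le_trans (hmin1 p hpcsa) hp1
  have hx2h : height E (lcsa E r j i) ≤ 1 :=
    le_trans (hmin2 p ((s8_csa_comm i j) ▸ hpcsa)) hp1
  obtain ⟨e1i, e1j⟩ := s8_lcsa_parent hnet.acyclic hi hj hij hm1 hx1h
  obtain ⟨e2i, e2j⟩ := s8_lcsa_parent hnet.acyclic hi hj hij ((s8_csa_comm j i) ▸ hm2) hx2h
  have hx1i : lcsa E r i j ≠ i := fun h => hi i (by rw [h] at e1i; exact e1i)
  have hx2j : lcsa E r j i ≠ j := fun h => hj j (by rw [h] at e2j; exact e2j)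
  show dist E (lcsa E r i j) i + dist E (lcsa E r j i) j = 2
  rw [s8_dist_eq_one hx1i e1i, s8_dist_eq_one hx2j e2j]

theorem s8_backward (hnet : IsHybNet E r) (hqb : QuasiBinary E) (htc : TreeChild E)
    (hti : TimeConsistent E) {i j : V} (hi : IsLeaf E i) (hj : IsLeaf E j) (hij : i ≠ j)
    (h2 : pathLen E r i j = 2) : Sibling E i j := by
  obtain ⟨⟨hd1i, hd1j, hstrict1⟩, hmin1⟩ := s8_lcsa_spec hnet i j
  obtain ⟨⟨hd2j, hd2i, hstrict2⟩, hmin2⟩ := s8_lcsa_spec hnet j i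
  set x1 := lcsa E r i j with hx1def
  set x2 := lcsa E r j i with hx2def
  have hx1i : x1 ≠ i := fun h => hij ((s8_leaf_fix hi (h ▸ hd1j)).symm)
  have hx2j : x2 ≠ j := fun h => hij (s8_leaf_fix hj (h ▸ hd2i))
  have hpl : dist E x1 i + dist E x2 j = 2 := h2
  have hpos1 : 1 ≤ dist E x1 i := s8_dist_pos hx1i hd1i
  have hpos2 : 1 ≤ dist E x2 j := s8_dist_pos hx2j hd2j
  have hdd1 : dist E x1 i = 1 := by omega
  have hdd2 : dist E x2 j = 1 := by omega
  have e1 : E x1 i := by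
    obtain ⟨p, hp, hlen⟩ := s8_dist_spec hd1i
    rw [hdd1] at hlen
    exact s8_walk_two hp hlen
  have e2 : E x2 j := by
    obtain ⟨p, hp, hlen⟩ := s8_dist_spec hd2j
    rw [hdd2] at hlen
    exact s8_walk_two hp hlen
  by_cases hb1 : E x1 j
  · exact ⟨hij, x1, e1, hb1⟩
  by_cases hb2 : E x2 i
  · exact ⟨hij, x2, hb2, e2⟩
  exfalso
  have hm2' : x2 ∈ NetCSA E i j := (s8_csa_comm j i) ▸ (⟨hd2j, hd2i, hstrict2⟩ : x2 ∈ NetCSA E j i)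
  have hm1' : x1 ∈ NetCSA E j i := (s8_csa_comm i j) ▸ (⟨hd1i, hd1j, hstrict1⟩ : x1 ∈ NetCSA E i j)
  have hheq : height E x1 = height E x2 := le_antisymm (hmin1 x2 hm2') (hmin2 x1 hm1')
  have hx1j : x1 ≠ j := fun h => hj i (h ▸ e1)
  have hx2i : x2 ≠ i := fun h => hi j (h ▸ e2)
  have key : Desc E x1 x2 ∨ Desc E x2 x1 := by
    rcases le_or_gt (indeg E i) 1 with hti' | hhi'
    · right
      obtain ⟨p, hp⟩ := s8_walk_of_desc hd2i
      obtain ⟨u, hu, hdu, hub⟩ := s8_walk_penult hp hx2i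
      have : u = x1 := s8_parent_unique hti' hub e1
      exact this ▸ hdu
    rcases le_or_gt (indeg E j) 1 with htj' | hhj'
    · left
      obtain ⟨p, hp⟩ := s8_walk_of_desc hd1j
      obtain ⟨u, hu, hdu, hub⟩ := s8_walk_penult hp hx1j
      have : u = x2 := s8_parent_unique htj' hub e2
      exact this ▸ hdu
    rcases hstrict1 with hs1 | hs1
    · exfalso
      obtain ⟨p', hp', hp'ne⟩ := s8_other_parent hhi' e1
      obtain ⟨q0, hq0⟩ := s8_walk_of_desc (s8_root_desc hnet p')
      have hq : WalkFromTo E r i (q0 ++ [i]) := s8_walk_snoc hq0 hp'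
      have hx1mem := hs1.2 r _ hnet.isRoot hq
      have hx1q0 : x1 ∈ q0 := by
        rcases List.mem_append.mp hx1mem with h | h
        · exact h
        · simp at h; exact absurd h hx1i
      have hdxp : Desc E x1 p' := (s8_walk_desc_mem hq0 hx1q0).2
      rcases Relation.ReflTransGen.cases_head hdxp with heq | ⟨c, hc, hcp⟩
      · exact hp'ne heq.symm
      obtain ⟨τ, hτ⟩ := hti
      have t1 : τ x1 = τ i := (hτ x1 i e1).2 hhi'
      have t2 : τ p' = τ i := (hτ p' i hp').2 hhi'
      have t3 : τ x1 ≤ τ c := s8_tau_arc_le hτ hc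
      have t4 : τ c ≤ τ p' := s8_tau_desc_le hτ hcp
      have hchyb : 2 ≤ indeg E c := by
        rcases le_or_gt (indeg E c) 1 with h | h
        · have := (hτ x1 c hc).1 h; omega
        · exact h
      have hci : c ≠ i := by
        intro hcieq
        rw [hcieq] at hcp
        have hpi' := s8_leaf_fix hi hcp
        rw [hpi'] at hp'
        exact hi i hp'
      obtain ⟨w, hw, hwt⟩ := htc x1 (fun h => h i e1)
      rcases s8_children_eq (s8_outdeg_le_two hqb x1) e1 hc (Ne.symm hci) w hw with rfl | rfl
      · unfold IsTreeNode at hwt; omega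
      · unfold IsTreeNode at hwt; omega
    · left
      obtain ⟨q0, hq0⟩ := s8_walk_of_desc (s8_root_desc hnet x2)
      have hq : WalkFromTo E r j (q0 ++ [j]) := s8_walk_snoc hq0 e2
      have hx1mem := hs1.2 r _ hnet.isRoot hq
      have hx1q0 : x1 ∈ q0 := by
        rcases List.mem_append.mp hx1mem with h | h
        · exact h
        · simp at h; exact absurd h hx1j
      exact (s8_walk_desc_mem hq0 hx1q0).2
  rcases key with hd | hd
  · rcases Relation.reflTransGen_iff_eq_or_transGen.mp hd with heq | htg
    · exact hb1 (heq ▸ e2)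
    · have := s8_height_lt hnet.acyclic htg; omega
  · rcases Relation.reflTransGen_iff_eq_or_transGen.mp hd with heq | htg
    · exact hb2 (heq ▸ e1)
    · have := s8_height_lt hnet.acyclic htg; omega

end D


/-- In a quasi-binary TCTC hybridization network, two leaves are siblings
iff their LCSA-path length is 2. -/
theorem stmt8 {V : Type} [Fintype V] (E : V → V → Prop) (r : V)
    (hnet : IsHybNet E r) (hqb : QuasiBinary E)
    (htc : TreeChild E) (hti : TimeConsistent E)
    (i j : V) (hi : IsLeaf E i) (hj : IsLeaf E j) (hij : i ≠ j) :
    Sibling E i j ↔ pathLen E r i j = 2 :=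
  ⟨s8_forward hnet hqb htc hi hj hij, s8_backward hnet hqb htc hti hi hj hij⟩
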